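/- Let X be a real Hilbert space and Y a finite-dimensional real Hilbert space, A : X → Y a bounded linear operator, and (X_j)_{j∈ℕ} a sequence of closed subspaces of X with X_j ⊆ X_{j+1} for all j, with (ker A)^⊥ ⊆ closure(∪_{j∈ℕ} X_j), and such that for every j the restriction of A to X_j is surjective onto Y. Let g ∈ Y and let V denote the closure of ∪_{j∈ℕ} {x ∈ X_j : A x = g} (a nonempty closed affine subset of X). Then for every f ∈ (ker A)^⊥, the metric projections coincide: P_V f = P_{M_A(g)} f, where M_A(g) := {x ∈ X : A x = g}. -/

import Mathlib

open Submodule Filter Topology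

lemma inner_eq_zero_of_min' {X : Type*} [NormedAddCommGroup X] [InnerProductSpace ℝ X]
    (v w : X) (h : ∀ t : ℝ, ‖v‖ ≤ ‖v - t • w‖) : inner ℝ v w = (0 : ℝ) := by
  by_contra hc
  have hw : w ≠ 0 := by rintro rfl; simp at hc
  have hw2 : (0:ℝ) < ‖w‖^2 := by
    have := norm_pos_iff.mpr hw; positivity
  set c : ℝ := inner ℝ v w with hcdef
  set t : ℝ := c / ‖w‖^2 with ht
  have h2 : ‖v - t • w‖^2 = ‖v‖^2 - 2*(t*c) + t^2*‖w‖^2 := by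
    rw [norm_sub_sq_real, real_inner_smul_right, norm_smul, mul_pow,
      Real.norm_eq_abs, sq_abs]
  have h3 : ‖v‖^2 ≤ ‖v - t • w‖^2 := by
    apply pow_le_pow_left₀ (norm_nonneg _) (h t)
  have e1 : t * c = c^2 / ‖w‖^2 := by rw [ht]; ring
  have e2 : t^2 * ‖w‖^2 = c^2 / ‖w‖^2 := by rw [ht]; field_simp
  have e3 : (0:ℝ) < c^2 / ‖w‖^2 :=
    div_pos ((sq_nonneg c).lt_of_ne (Ne.symm (pow_ne_zero 2 hc))) hw2
  nlinarith [h2, h3, e1, e2, e3]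

theorem projection_onto_closure_union_eq_projection_onto_solution_set
    {X Y : Type*} [NormedAddCommGroup X] [InnerProductSpace ℝ X] [CompleteSpace X]
    [NormedAddCommGroup Y] [InnerProductSpace ℝ Y] [FiniteDimensional ℝ Y]
    (A : X →L[ℝ] Y)
    (Xs : ℕ → Submodule ℝ X) (hmono : ∀ j, Xs j ≤ Xs (j + 1))
    (hclosed : ∀ j, IsClosed (Xs j : Set X))
    (hdense : ((LinearMap.ker (A : X →ₗ[ℝ] Y))ᗮ : Set X) ⊆ closure (⋃ j, (Xs j : Set X)))
    (hsurj : ∀ j, ∀ y : Y, ∃ v ∈ Xs j, A v = y)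
    (g : Y)
    (V : Set X) (hV : V = closure (⋃ j, {x : X | x ∈ Xs j ∧ A x = g}))
    (f : X) (hf : f ∈ (LinearMap.ker (A : X →ₗ[ℝ] Y))ᗮ)
    (p : X) (hpV : p ∈ V) (hpproj : ∀ z ∈ V, ‖f - p‖ ≤ ‖f - z‖)
    (q : X) (hqsol : A q = g) (hqproj : ∀ z : X, A z = g → ‖f - q‖ ≤ ‖f - z‖) :
    p = q := by
  have hm : Monotone Xs := monotone_nat_of_le_succ hmono
  -- V ⊆ solution set
  have hVM : ∀ x ∈ V, A x = g := by
    intro x hx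
    rw [hV] at hx
    have hcl : IsClosed {x : X | A x = g} := isClosed_eq A.continuous continuous_const
    have : x ∈ {x : X | A x = g} := by
      refine closure_minimal ?_ hcl hx
      exact Set.iUnion_subset fun j x hx => hx.2
    exact this
  -- f - q is orthogonal to ker A
  have hfq : f - q ∈ (LinearMap.ker (A : X →ₗ[ℝ] Y))ᗮ := by
    rw [Submodule.mem_orthogonal]
    intro w hw
    rw [real_inner_comm]
    apply inner_eq_zero_of_min'
    intro t
    have : A (q + t • w) = g := by
      simp [show A w = 0 from LinearMap.mem_ker.mp hw, hqsol]
    calc ‖f - q‖ ≤ ‖f - (q + t • w)‖ := hqproj _ this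
    _ = ‖f - q - t • w‖ := by rw [sub_add_eq_sub_sub]
  -- q ∈ (ker A)ᗮ
  have hq_perp : q ∈ (LinearMap.ker (A : X →ₗ[ℝ] Y))ᗮ := by
    have : q = f - (f - q) := (sub_sub_cancel f q).symm
    rw [this]
    exact Submodule.sub_mem _ hf hfq
  -- construct a continuous right inverse into Xs 0
  classical
  let b := Module.finBasis ℝ Y
  have hv : ∀ i, ∃ v ∈ Xs 0, A v = b i := fun i => hsurj 0 (b i)
  let v : _ → Xs 0 := fun i => ⟨(hv i).choose, (hv i).choose_spec.1⟩
  let B : Y →ₗ[ℝ] Xs 0 := b.constr ℝ v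
  let C : Y →ₗ[ℝ] X := (Xs 0).subtype ∘ₗ B
  have hAB : ∀ y, A (C y) = y := by
    have : (A : X →ₗ[ℝ] Y) ∘ₗ C = LinearMap.id := by
      apply b.ext
      intro i
      simp only [LinearMap.comp_apply, LinearMap.id_apply, C, B]
      rw [Module.Basis.constr_basis]
      exact (hv i).choose_spec.2
    intro y
    exact congrArg (fun φ => φ y) this
  have hCmem : ∀ y j, C y ∈ Xs j := fun y j => hm (Nat.zero_le j) (B y).2
  have hCcont : Continuous C := C.continuous_of_finiteDimensional
  -- q ∈ V
  have hqV : q ∈ V := by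
    have hq_cl : q ∈ closure (⋃ j, (Xs j : Set X)) := hdense hq_perp
    obtain ⟨u, hu, hulim⟩ := mem_closure_iff_seq_limit.mp hq_cl
    rw [hV]
    refine mem_closure_of_tendsto (f := fun n => u n + C (g - A (u n)))
      (b := atTop) ?_ ?_
    · -- tendsto
      have h1 : Tendsto (fun n => C (g - A (u n))) atTop (nhds (C (g - A q))) :=
        (hCcont.comp (continuous_const.sub A.continuous)).continuousAt.tendsto.comp hulim
      have h2 : C (g - A q) = 0 := by rw [hqsol, sub_self, map_zero]
      rw [h2] at h1
      simpa using hulim.add h1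
    · filter_upwards with n
      obtain ⟨s, ⟨j, rfl⟩, hj⟩ := hu n
      refine Set.mem_iUnion.mpr ⟨j, ?_, ?_⟩
      · exact (Xs j).add_mem hj (hCmem _ j)
      · simp [hAB]
  -- V is convex
  have hconv : Convex ℝ V := by
    rw [hV]
    apply Convex.closure
    intro x hx y hy a bb ha hb hab
    obtain ⟨s, ⟨j, rfl⟩, hxj⟩ := hx
    obtain ⟨s, ⟨k, rfl⟩, hyk⟩ := hy
    refine Set.mem_iUnion.mpr ⟨max j k, ?_, ?_⟩
    · exact (Xs (max j k)).add_mem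
        ((Xs (max j k)).smul_mem a (hm (le_max_left j k) hxj.1))
        ((Xs (max j k)).smul_mem bb (hm (le_max_right j k) hyk.1))
    · simp [hxj.2, hyk.2, ← add_smul, hab]
  -- equal distances
  have hd1 : ‖f - q‖ ≤ ‖f - p‖ := hqproj p (hVM p hpV)
  have hd2 : ‖f - p‖ ≤ ‖f - q‖ := hpproj q hqV
  have hd : ‖f - p‖ = ‖f - q‖ := le_antisymm hd2 hd1
  -- midpoint argument
  have hmid : (1/2 : ℝ) • p + (1/2 : ℝ) • q ∈ V :=
    hconv hpV hqV (by norm_num) (by norm_num) (by norm_num)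
  have hdm : ‖f - p‖ ≤ ‖f - ((1/2 : ℝ) • p + (1/2 : ℝ) • q)‖ := hpproj _ hmid
  have hpar := parallelogram_law_with_norm ℝ (f - p) (f - q)
  have hsumeq : (f - p) + (f - q) = (2:ℝ) • (f - ((1/2 : ℝ) • p + (1/2 : ℝ) • q)) := by
    rw [smul_sub, smul_add, smul_smul, smul_smul]
    norm_num
    module
  have hnorm2 : ‖(f - p) + (f - q)‖ = 2 * ‖f - ((1/2 : ℝ) • p + (1/2 : ℝ) • q)‖ := by
    rw [hsumeq, norm_smul]
    norm_num
  have hsub : (f - p) - (f - q) = q - p := by abel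
  have : ‖q - p‖^2 ≤ 0 := by
    have h1 : ‖(f-p)+(f-q)‖^2 + ‖q-p‖^2 = 2*(‖f-p‖^2 + ‖f-q‖^2) := by
      rw [← hsub]; exact hpar
    have h2 : 2*‖f-p‖ ≤ ‖(f-p)+(f-q)‖ := by
      rw [hnorm2]; linarith [hdm]
    nlinarith [norm_nonneg ((f-p)+(f-q)), norm_nonneg (f-p), hd, h1, h2]
  have : q - p = 0 := by
    have h0 : ‖q - p‖ = 0 := by nlinarith [norm_nonneg (q-p)]
    exact norm_eq_zero.mp h0
  exact (sub_eq_zero.mp this).symm
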